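/- Let N and M be fully connected ReLU networks, P ⊆ ℝ^{n_0} a set of admissible inputs, and (i,j) a hidden neuron of N. Let a ∈ ℝ be a bound computed with respect to M (an upper bound for inc neurons, a lower bound for dec neurons), and let N̄ be the Freeze of neuron (i,j) of N with constant a (the qFreeze with respect to M). If neuron (i,j) is inc in N and a is also an upper bound of v_{i,j}(x) in N for every x ∈ P, or neuron (i,j) is dec in N and a is also a lower bound of v_{i,j}(x) in N for every x ∈ P, then N̄(x) ≥ N(x) for every x ∈ P. -/

import Mathlib

noncomputable section

/-- The ReLU activation function. -/
def relu (t : ℝ) : ℝ := max t 0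

/-- A fully connected feedforward network with `L + 1` layers `0, 1, …, L`
(layer `0` is the input layer, layer `L` the output layer, layers
`1, …, L - 1` the hidden layers).  `n i` is the size of layer `i` (its neurons
are the indices `< n i`); `W i q p` is the weight of the edge from neuron `p`
of layer `i - 1` to neuron `q` of layer `i` (for `1 ≤ i ≤ L`), and `b i q` is
the bias of neuron `q` of layer `i`. -/
structure Net where
  L : ℕ
  n : ℕ → ℕ
  W : ℕ → ℕ → ℕ → ℝ
  b : ℕ → ℕ → ℝ

namespace Net

/-- `act N x i q` : the value `v_{i,q}(x)` of neuron `q` of layer `i` on input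
`x` (`v_0 = x`, and ReLU is applied at every layer `i ≥ 1`). -/
def act (N : Net) (x : ℕ → ℝ) : ℕ → ℕ → ℝ
  | 0 => x
  | i + 1 => fun q =>
      relu ((∑ p ∈ Finset.range (N.n i), N.W (i + 1) q p * Net.act N x i p) + N.b (i + 1) q)

/-- The (single, index `0`) output of the network: the output layer is affine
(no ReLU): `N(x) = W_L v_{L-1}(x) + b_L`. -/
def out (N : Net) (x : ℕ → ℝ) : ℝ :=
  (∑ p ∈ Finset.range (N.n (N.L - 1)), N.W N.L 0 p * N.act x (N.L - 1) p) + N.b N.L 0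

/-- Auxiliary suffix evaluation, with explicit fuel `d = L - 1 - i`. -/
def suffixAux (N : Net) : ℕ → ℕ → (ℕ → ℝ) → ℝ
  | 0, i, u => (∑ p ∈ Finset.range (N.n i), N.W (i + 1) 0 p * u p) + N.b (i + 1) 0
  | d + 1, i, u =>
      Net.suffixAux N d (i + 1) fun q =>
        relu ((∑ p ∈ Finset.range (N.n i), N.W (i + 1) q p * u p) + N.b (i + 1) q)

/-- The suffix function `S_i^N : ℝ^{n_i} → ℝ` (meaningful for `1 ≤ i ≤ L - 1`):
`S_{L-1}(u) = W_L u + b_L` and `S_i(u) = S_{i+1}(σ(W_{i+1} u + b_{i+1}))`. -/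
def suffix (N : Net) (i : ℕ) (u : ℕ → ℝ) : ℝ := N.suffixAux (N.L - 1 - i) i u

end Net

/-- `f` is monotone nondecreasing in coordinate `j`. -/
def MonoIncAt (f : (ℕ → ℝ) → ℝ) (j : ℕ) : Prop :=
  ∀ (u : ℕ → ℝ) (a a' : ℝ), a ≤ a' → f (Function.update u j a) ≤ f (Function.update u j a')

/-- `f` is monotone nonincreasing in coordinate `j`. -/
def MonoDecAt (f : (ℕ → ℝ) → ℝ) (j : ℕ) : Prop :=
  ∀ (u : ℕ → ℝ) (a a' : ℝ), a ≤ a' → f (Function.update u j a') ≤ f (Function.update u j a)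

/-- Hidden neuron `(i, j)` is `inc`: the suffix function `S_i` is monotone
nondecreasing in coordinate `j`. -/
def Net.Inc (N : Net) (i j : ℕ) : Prop := MonoIncAt (N.suffix i) j

/-- Hidden neuron `(i, j)` is `dec`: the suffix function `S_i` is monotone
nonincreasing in coordinate `j`. -/
def Net.Dec (N : Net) (i j : ℕ) : Prop := MonoDecAt (N.suffix i) j
/-- The Freeze of hidden neuron `(i, j)` with constant `a`: every incoming
weight of the neuron is set to `0` and its bias is set to `a`; all other
weights and biases are unchanged. -/
def Net.freeze (N : Net) (i j : ℕ) (a : ℝ) : Net where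
  L := N.L
  n := N.n
  W := fun m q p => if m = i ∧ q = j then 0 else N.W m q p
  b := fun m q => if m = i ∧ q = j then a else N.b m q


lemma freeze_W_ne (N : Net) (i j : ℕ) (a : ℝ) (m q p : ℕ) (h : m ≠ i) :
    (N.freeze i j a).W m q p = N.W m q p := by simp [Net.freeze, h]

lemma freeze_b_ne (N : Net) (i j : ℕ) (a : ℝ) (m q : ℕ) (h : m ≠ i) :
    (N.freeze i j a).b m q = N.b m q := by simp [Net.freeze, h]

lemma suffixAux_act (N : Net) (x : ℕ → ℝ) :
    ∀ d i, i + d + 1 = N.L → N.suffixAux d i (N.act x i) = N.out x := by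
  intro d
  induction d with
  | zero =>
    intro i h
    unfold Net.out Net.suffixAux
    rw [show N.L = i + 1 from by omega]
    simp
  | succ d ih =>
    intro i h
    show N.suffixAux d (i + 1) (N.act x (i + 1)) = N.out x
    exact ih (i + 1) (by omega)

lemma suffixAux_freeze (N : Net) (i j : ℕ) (a : ℝ) :
    ∀ d i', i ≤ i' → ∀ u, (N.freeze i j a).suffixAux d i' u = N.suffixAux d i' u := by
  intro d
  induction d with
  | zero =>
    intro i' h u
    simp only [Net.suffixAux]
    rw [freeze_b_ne N i j a _ _ (by omega)]
    congr 1
    · apply Finset.sum_congr rfl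
      intro p _
      rw [freeze_W_ne N i j a _ _ _ (by omega)]
  | succ d ih =>
    intro i' h u
    simp only [Net.suffixAux]
    rw [ih (i' + 1) (by omega)]
    congr 1
    funext q
    rw [freeze_b_ne N i j a _ _ (by omega)]
    congr 2
    apply Finset.sum_congr rfl
    intro p _
    rw [freeze_W_ne N i j a _ _ _ (by omega)]

lemma act_freeze_lt (N : Net) (i j : ℕ) (a : ℝ) (x : ℕ → ℝ) :
    ∀ m, m < i → (N.freeze i j a).act x m = N.act x m := by
  intro m
  induction m with
  | zero => intro _; rfl
  | succ m ih =>
    intro h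
    funext q
    simp only [Net.act, ih (by omega)]
    rw [freeze_b_ne N i j a _ _ (by omega)]
    congr 2
    apply Finset.sum_congr rfl
    intro p _
    rw [freeze_W_ne N i j a _ _ _ (by omega)]

lemma relu_nonneg (t : ℝ) : 0 ≤ relu t := le_max_right t 0

/-- Lemma 6, soundness of the generalized Freeze `qFreeze`.
Freezing a neuron `(i, j)` of `N` with a constant `a` that is a bound computed
with respect to another network `M` (an upper bound for `inc` neurons, a lower
bound for `dec` neurons) is sound, provided `a` is also a corresponding bound
of the neuron's value in `N` itself over the admissible inputs `P`. -/
theorem statement_11 (N M : Net)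
    (hLN : 1 ≤ N.L) (houtN : N.n N.L = 1) (hLM : 1 ≤ M.L) (houtM : M.n M.L = 1)
    (P : Set (ℕ → ℝ)) (i j : ℕ)
    (hi : 1 ≤ i) (hiLN : i < N.L) (hjN : j < N.n i)
    (hiLM : i < M.L) (hjM : j < M.n i) (a : ℝ)
    (hcase :
      (N.Inc i j ∧ (∀ x ∈ P, M.act x i j ≤ a) ∧ (∀ x ∈ P, N.act x i j ≤ a)) ∨
      (N.Dec i j ∧ (∀ x ∈ P, a ≤ M.act x i j) ∧ (∀ x ∈ P, a ≤ N.act x i j))) :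
    ∀ x ∈ P, N.out x ≤ (N.freeze i j a).out x := by
  intro x hx
  obtain ⟨k, rfl⟩ : ∃ k, i = k + 1 := ⟨i - 1, by omega⟩
  set F := N.freeze (k + 1) j a with hF
  have hactlow : F.act x k = N.act x k := act_freeze_lt N (k + 1) j a x k (by omega)
  have hacti : F.act x (k + 1) = Function.update (N.act x (k + 1)) j (relu a) := by
    funext q
    by_cases hq : q = j
    · subst hq
      simp [Net.act, hF, Net.freeze, relu]
    · simp only [Net.act, Function.update_of_ne hq, hactlow, hF]
      simp only [hF, Net.freeze] at hactlow
      simp [Net.freeze, hq, hactlow]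
  set d := N.L - 1 - (k + 1) with hd
  have hNL : (k + 1) + d + 1 = N.L := by omega
  have hNout : N.out x = N.suffixAux d (k + 1) (N.act x (k + 1)) :=
    (suffixAux_act N x d (k + 1) hNL).symm
  have hFout : F.out x
      = N.suffixAux d (k + 1) (Function.update (N.act x (k + 1)) j (relu a)) := by
    have h1 := suffixAux_act F x d (k + 1) hNL
    rw [← h1, hacti]
    exact suffixAux_freeze N (k + 1) j a d (k + 1) le_rfl _
  have h0 : (0 : ℝ) ≤ N.act x (k + 1) j := le_max_right _ _
  rcases hcase with ⟨hInc, _, hub⟩ | ⟨hDec, _, hlb⟩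
  · have ha : N.act x (k + 1) j ≤ a := hub x hx
    have hra : relu a = a := max_eq_left (le_trans h0 ha)
    rw [hNout, hFout, hra]
    have h2 := hInc (N.act x (k + 1)) (N.act x (k + 1) j) a ha
    rw [Function.update_eq_self] at h2
    simp only [Net.suffix] at h2
    rwa [← hd] at h2
  · have ha : a ≤ N.act x (k + 1) j := hlb x hx
    have hra : relu a ≤ N.act x (k + 1) j := max_le ha h0
    rw [hNout, hFout]
    have h2 := hDec (N.act x (k + 1)) (relu a) (N.act x (k + 1) j) hra
    rw [Function.update_eq_self] at h2
    simp only [Net.suffix] at h2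
    rwa [← hd] at h2
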